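/- Let C ∈ ℝ^{m×(k)} have full column rank with thin QR factorization C = Q_C R_C, let I_* be an index set such that U = C(I_*,:)-based core matrix, i.e., U = Π_{I_*}^T C, and suppose Π_{I_*}^T Q_C has full column rank. Then for any perturbations ΔC and ΔU and any ε > 0: ‖(C + ΔC)(U + ΔU)_ε^†‖₂ ≤ ‖(Π_{I_*}^T Q_C)^†‖₂ (1 + ‖ΔU‖₂/ε) + ‖ΔC‖₂/ε. -/

import Mathlib

open Matrix

noncomputable section

/-- `B` is the Moore–Penrose pseudoinverse of `A` (the four Penrose conditions). -/
def IsMP {m n : ℕ} (A : Matrix (Fin m) (Fin n) ℝ) (B : Matrix (Fin n) (Fin m) ℝ) : Prop :=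
  A * B * A = A ∧ B * A * B = B ∧ (A * B)ᵀ = A * B ∧ (B * A)ᵀ = B * A

/-- Euclidean norm of a vector. -/
def enorm2 {a : ℕ} (v : Fin a → ℝ) : ℝ := Real.sqrt (∑ i, (v i) ^ 2)

/-- Spectral (ℓ2 operator) norm of a matrix. -/
def spec {a b : ℕ} (M : Matrix (Fin a) (Fin b) ℝ) : ℝ :=
  sSup {r | ∃ x : Fin b → ℝ, enorm2 x = 1 ∧ r = enorm2 (M.mulVec x)}

/-- Selection matrix whose columns are the columns of the identity indexed by `g`. -/
def sel {a b : ℕ} (g : Fin a → Fin b) : Matrix (Fin b) (Fin a) ℝ :=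
  fun i j => if g j = i then 1 else 0

namespace SH

variable {a b c : ℕ}

def clm (M : Matrix (Fin a) (Fin b) ℝ) : EuclideanSpace ℝ (Fin b) →L[ℝ] EuclideanSpace ℝ (Fin a) :=
  LinearMap.toContinuousLinearMap (Matrix.toEuclideanLin M)

lemma enorm_eq (v : Fin a → ℝ) : enorm2 v = ‖(WithLp.equiv 2 (Fin a → ℝ)).symm v‖ := by
  rw [EuclideanSpace.norm_eq]
  simp [enorm2, sq_abs]

lemma clm_apply (M : Matrix (Fin a) (Fin b) ℝ) (x : EuclideanSpace ℝ (Fin b)) :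
    clm M x = (WithLp.equiv 2 (Fin a → ℝ)).symm (M.mulVec ((WithLp.equiv 2 (Fin b → ℝ)) x)) :=
  Matrix.toEuclideanLin_apply M x

lemma norm_clm_apply (M : Matrix (Fin a) (Fin b) ℝ) (x : EuclideanSpace ℝ (Fin b)) :
    ‖clm M x‖ = enorm2 (M.mulVec ((WithLp.equiv 2 (Fin b → ℝ)) x)) := by
  rw [clm_apply, enorm_eq]

lemma spec_eq (M : Matrix (Fin a) (Fin b) ℝ) : spec M = ‖clm M‖ := by
  have hset : {r | ∃ x : Fin b → ℝ, enorm2 x = 1 ∧ r = enorm2 (M.mulVec x)} =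
      {r | ∃ x : EuclideanSpace ℝ (Fin b), ‖x‖ = 1 ∧ r = ‖clm M x‖} := by
    ext r
    constructor
    · rintro ⟨x, hx, rfl⟩
      exact ⟨(WithLp.equiv 2 (Fin b → ℝ)).symm x, by rw [← enorm_eq]; exact hx,
        by rw [norm_clm_apply]; simp⟩
    · rintro ⟨x, hx, rfl⟩
      exact ⟨(WithLp.equiv 2 (Fin b → ℝ)) x, by rw [enorm_eq]; simpa using hx,
        by rw [norm_clm_apply]⟩
  rw [spec, hset]
  rcases Nat.eq_zero_or_pos b with hb | hb
  · subst hb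
    have h1 : {r | ∃ x : EuclideanSpace ℝ (Fin 0), ‖x‖ = 1 ∧ r = ‖clm M x‖} = ∅ := by
      ext r
      simp only [Set.mem_setOf_eq, Set.mem_empty_iff_false, iff_false]
      rintro ⟨x, hx, -⟩
      have : x = 0 := Subsingleton.elim _ _
      rw [this, norm_zero] at hx
      exact one_ne_zero hx.symm
    have h2 : clm M = 0 := by
      ext x i
      have : x = 0 := Subsingleton.elim _ _
      simp [this]
    rw [h1, h2, Real.sSup_empty, norm_zero]
  · set S := {r | ∃ x : EuclideanSpace ℝ (Fin b), ‖x‖ = 1 ∧ r = ‖clm M x‖}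
    have hbdd : BddAbove S := by
      refine ⟨‖clm M‖, ?_⟩
      rintro r ⟨x, hx, rfl⟩
      calc ‖clm M x‖ ≤ ‖clm M‖ * ‖x‖ := (clm M).le_opNorm x
        _ = ‖clm M‖ := by rw [hx, mul_one]
    have hne : ∃ r ∈ S, (0:ℝ) ≤ r := by
      refine ⟨‖clm M (EuclideanSpace.single ⟨0, hb⟩ 1)‖, ⟨_, ?_, rfl⟩, norm_nonneg _⟩
      simp [EuclideanSpace.norm_single]
    obtain ⟨r₀, hr₀S, hr₀⟩ := hne
    have hsnn : 0 ≤ sSup S := le_trans hr₀ (le_csSup hbdd hr₀S)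
    apply le_antisymm
    · apply Real.sSup_le _ (norm_nonneg _)
      rintro r ⟨x, hx, rfl⟩
      calc ‖clm M x‖ ≤ ‖clm M‖ * ‖x‖ := (clm M).le_opNorm x
        _ = ‖clm M‖ := by rw [hx, mul_one]
    · apply (clm M).opNorm_le_bound hsnn
      intro x
      rcases eq_or_ne x 0 with rfl | hx
      · simp
      · have hnx : (0:ℝ) < ‖x‖ := norm_pos_iff.mpr hx
        have hy : ‖(‖x‖⁻¹ • x)‖ = 1 := by
          rw [norm_smul, norm_inv, norm_norm, inv_mul_cancel₀ hnx.ne']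
        have hmem : ‖clm M (‖x‖⁻¹ • x)‖ ∈ S := ⟨_, hy, rfl⟩
        have := le_csSup hbdd hmem
        rw [_root_.map_smul, norm_smul, norm_inv, norm_norm] at this
        calc ‖clm M x‖ = ‖x‖ * (‖x‖⁻¹ * ‖clm M x‖) := by field_simp
          _ ≤ ‖x‖ * sSup S := by
              exact mul_le_mul_of_nonneg_left this hnx.le
          _ = sSup S * ‖x‖ := mul_comm _ _

lemma spec_nonneg (M : Matrix (Fin a) (Fin b) ℝ) : 0 ≤ spec M := by
  rw [spec_eq]; exact norm_nonneg _

lemma clm_mul (A : Matrix (Fin a) (Fin b) ℝ) (B : Matrix (Fin b) (Fin c) ℝ) :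
    clm (A * B) = (clm A).comp (clm B) := by
  ext x i
  simp [clm_apply, Matrix.mulVec_mulVec]

lemma spec_mul_le (A : Matrix (Fin a) (Fin b) ℝ) (B : Matrix (Fin b) (Fin c) ℝ) :
    spec (A * B) ≤ spec A * spec B := by
  rw [spec_eq, spec_eq, spec_eq, clm_mul]
  exact ContinuousLinearMap.opNorm_comp_le _ _

lemma spec_add_le (A B : Matrix (Fin a) (Fin b) ℝ) : spec (A + B) ≤ spec A + spec B := by
  rw [spec_eq, spec_eq, spec_eq]
  have : clm (A + B) = clm A + clm B := by ext x i; simp [clm_apply, Matrix.add_mulVec]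
  rw [this]; exact norm_add_le _ _

lemma spec_neg (A : Matrix (Fin a) (Fin b) ℝ) : spec (-A) = spec A := by
  rw [spec_eq, spec_eq]
  have : clm (-A) = -clm A := by ext x i; simp [clm_apply, Matrix.neg_mulVec]
  rw [this, norm_neg]

lemma spec_le_bound (M : Matrix (Fin a) (Fin b) ℝ) {cc : ℝ} (hc : 0 ≤ cc)
    (h : ∀ x : Fin b → ℝ, enorm2 (M.mulVec x) ≤ cc * enorm2 x) : spec M ≤ cc := by
  rw [spec_eq]
  apply (clm M).opNorm_le_bound hc
  intro x
  have := h ((WithLp.equiv 2 (Fin b → ℝ)) x)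
  rw [← norm_clm_apply] at this
  simpa [enorm_eq] using this

end SH

namespace SH2
open SH

variable {a b c : ℕ}

lemma enorm_nonneg (v : Fin a → ℝ) : 0 ≤ enorm2 v := Real.sqrt_nonneg _

lemma enorm_eq_sqrt_dot (v : Fin a → ℝ) : enorm2 v = Real.sqrt (v ⬝ᵥ v) := by
  simp [enorm2, dotProduct, sq]

lemma enorm_mulVec_of_orth {M : Matrix (Fin a) (Fin b) ℝ} (h : Mᵀ * M = 1) (v : Fin b → ℝ) :
    enorm2 (M *ᵥ v) = enorm2 v := by
  rw [enorm_eq_sqrt_dot, enorm_eq_sqrt_dot v]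
  congr 1
  rw [Matrix.dotProduct_mulVec, ← Matrix.mulVec_transpose, Matrix.mulVec_mulVec, h,
    Matrix.one_mulVec]

lemma spec_orth_mul {M : Matrix (Fin a) (Fin b) ℝ} (h : Mᵀ * M = 1)
    (A : Matrix (Fin b) (Fin c) ℝ) : spec (M * A) = spec A := by
  unfold spec
  congr 1
  ext r
  constructor
  · rintro ⟨x, hx, rfl⟩
    exact ⟨x, hx, by rw [← Matrix.mulVec_mulVec, enorm_mulVec_of_orth h]⟩
  · rintro ⟨x, hx, rfl⟩
    exact ⟨x, hx, by rw [← Matrix.mulVec_mulVec, enorm_mulVec_of_orth h]⟩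

lemma abs_dot_le (u v : Fin a → ℝ) : |u ⬝ᵥ v| ≤ enorm2 u * enorm2 v := by
  have := abs_real_inner_le_norm ((WithLp.equiv 2 (Fin a → ℝ)).symm u)
    ((WithLp.equiv 2 (Fin a → ℝ)).symm v)
  rw [enorm_eq, enorm_eq]
  simpa [PiLp.inner_apply, RCLike.inner_apply, dotProduct, mul_comm] using this

lemma spec_transpose_le_one {M : Matrix (Fin a) (Fin b) ℝ} (h : Mᵀ * M = 1) :
    spec Mᵀ ≤ 1 := by
  apply spec_le_bound _ zero_le_one
  intro x
  rw [one_mul]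
  set u := Mᵀ *ᵥ x with hu
  have h1 : u ⬝ᵥ u = (M *ᵥ u) ⬝ᵥ x := by
    conv_lhs => rw [hu]
    rw [Matrix.dotProduct_mulVec, Matrix.vecMul_transpose]
  have h2 : u ⬝ᵥ u ≤ enorm2 u * enorm2 x := by
    calc u ⬝ᵥ u = (M *ᵥ u) ⬝ᵥ x := h1
      _ ≤ |(M *ᵥ u) ⬝ᵥ x| := le_abs_self _
      _ ≤ enorm2 (M *ᵥ u) * enorm2 x := abs_dot_le _ _
      _ = enorm2 u * enorm2 x := by rw [enorm_mulVec_of_orth h]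
  rcases eq_or_lt_of_le (enorm_nonneg u) with h0 | h0
  · rw [← h0]; exact enorm_nonneg x
  · have : enorm2 u * enorm2 u ≤ enorm2 u * enorm2 x := by
      calc enorm2 u * enorm2 u = u ⬝ᵥ u := by
            rw [← sq, enorm_eq_sqrt_dot, Real.sq_sqrt]
            exact Finset.sum_nonneg fun i _ => mul_self_nonneg _
        _ ≤ enorm2 u * enorm2 x := h2
    exact le_of_mul_le_mul_left this h0

lemma spec_orth_le_one {M : Matrix (Fin a) (Fin b) ℝ} (h : Mᵀ * M = 1) : spec M ≤ 1 := by
  apply spec_le_bound _ zero_le_one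
  intro x
  rw [one_mul, enorm_mulVec_of_orth h]

lemma spec_diagonal_le {d : Fin a → ℝ} {cc : ℝ} (hc : 0 ≤ cc) (h : ∀ i, |d i| ≤ cc) :
    spec (Matrix.diagonal d) ≤ cc := by
  apply spec_le_bound _ hc
  intro x
  rw [enorm2, enorm2]
  have hb : ∀ i ∈ Finset.univ, ((Matrix.diagonal d).mulVec x i) ^ 2 ≤ cc ^ 2 * (x i) ^ 2 := by
    intro i _
    rw [Matrix.mulVec_diagonal, mul_pow]
    apply mul_le_mul_of_nonneg_right _ (sq_nonneg _)
    rw [← sq_abs (d i)]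
    exact pow_le_pow_left₀ (abs_nonneg _) (h i) 2
  calc Real.sqrt (∑ i, ((Matrix.diagonal d).mulVec x i) ^ 2)
      ≤ Real.sqrt (∑ i, cc ^ 2 * (x i) ^ 2) :=
        Real.sqrt_le_sqrt (Finset.sum_le_sum hb)
    _ = cc * Real.sqrt (∑ i, (x i) ^ 2) := by
        rw [← Finset.mul_sum, Real.sqrt_mul (sq_nonneg cc), Real.sqrt_sq hc]

lemma left_inv_of_MP {n q : ℕ} (A : Matrix (Fin q) (Fin n) ℝ) (G : Matrix (Fin n) (Fin q) ℝ)
    (hrank : A.rank = n) (hMP : A * G * A = A) : G * A = 1 := by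
  have hker : LinearMap.ker A.mulVecLin = ⊥ := by
    have h2 := LinearMap.finrank_range_add_finrank_ker A.mulVecLin
    rw [show Module.finrank ℝ (LinearMap.range A.mulVecLin) = n from hrank,
      Module.finrank_pi] at h2
    simp only [Fintype.card_fin] at h2
    have : Module.finrank ℝ (LinearMap.ker A.mulVecLin) = 0 := by omega
    exact Submodule.finrank_eq_zero.mp this
  have hinj : Function.Injective A.mulVec := by
    rw [show A.mulVec = A.mulVecLin from rfl, ← LinearMap.ker_eq_bot]
    exact hker
  have hmv : ∀ v, (G * A) *ᵥ v = (1 : Matrix (Fin n) (Fin n) ℝ) *ᵥ v := by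
    intro v
    apply hinj
    rw [Matrix.mulVec_mulVec, ← Matrix.mul_assoc, hMP, Matrix.one_mulVec]
  have : Matrix.toLin' (G * A) = Matrix.toLin' (1 : Matrix (Fin n) (Fin n) ℝ) := by
    refine LinearMap.ext fun v => ?_
    rw [Matrix.toLin'_apply, Matrix.toLin'_apply]
    exact hmv v
  exact Matrix.toLin'.injective this

end SH2

/-- Lemma 3.4: perturbation bound
`‖(C + ΔC)(U + ΔU)_ε†‖₂ ≤ ‖(Π_{I_*}ᵀ Q_C)†‖₂ (1 + ‖ΔU‖₂/ε) + ‖ΔC‖₂/ε`,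
where `U = Π_{I_*}ᵀ C` and `C = Q_C R_C` is a thin QR factorization. -/
theorem perturbed_trunc_pinv_norm_bound {m k p : ℕ} (ε : ℝ) (hε : 0 < ε)
    (C QC : Matrix (Fin m) (Fin k) ℝ) (RC : Matrix (Fin k) (Fin k) ℝ)
    (hQR : C = QC * RC) (hQC : QCᵀ * QC = 1) (hCrank : C.rank = k)
    (f : Fin (k + p) → Fin m) (hf : Function.Injective f)
    (hQCrank : ((sel f)ᵀ * QC).rank = k)
    (G : Matrix (Fin k) (Fin (k + p)) ℝ) (hG : IsMP ((sel f)ᵀ * QC) G)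
    (ΔC : Matrix (Fin m) (Fin k) ℝ) (ΔU : Matrix (Fin (k + p)) (Fin k) ℝ)
    -- thin SVD data of U + ΔU, with U = Π_{I_*}ᵀ C
    (W : Matrix (Fin (k + p)) (Fin k) ℝ) (V : Matrix (Fin k) (Fin k) ℝ) (σ : Fin k → ℝ)
    (hW : Wᵀ * W = 1) (hV : Vᵀ * V = 1) (hV' : V * Vᵀ = 1) (hσ : ∀ i, 0 ≤ σ i)
    (hUΔU : (sel f)ᵀ * C + ΔU = W * Matrix.diagonal σ * Vᵀ) :
    spec ((C + ΔC) * (V * Matrix.diagonal (fun i => if ε ≤ σ i then (σ i)⁻¹ else 0) * Wᵀ))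
      ≤ spec G * (1 + spec ΔU / ε) + spec ΔC / ε := by
  classical
  set g : Fin k → ℝ := fun i => if ε ≤ σ i then (σ i)⁻¹ else 0 with hg
  set P : Matrix (Fin k) (Fin (k + p)) ℝ := V * Matrix.diagonal g * Wᵀ with hP
  -- G is a left inverse of (sel f)ᵀ * QC
  have hGA : G * ((sel f)ᵀ * QC) = 1 := SH2.left_inv_of_MP _ G hQCrank hG.1
  -- RC in terms of G
  have hRCeq : RC = G * ((sel f)ᵀ * C) := by
    rw [hQR, ← Matrix.mul_assoc ((sel f)ᵀ), ← Matrix.mul_assoc G, hGA, Matrix.one_mul]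
  -- U = WΣVᵀ - ΔU
  have hU : (sel f)ᵀ * C = W * Matrix.diagonal σ * Vᵀ - ΔU := by
    rw [← hUΔU]; abel
  -- the SVD part collapses
  have hSVD : (W * Matrix.diagonal σ * Vᵀ) * P =
      W * Matrix.diagonal (fun i => σ i * g i) * Wᵀ := by
    rw [hP]
    calc (W * Matrix.diagonal σ * Vᵀ) * (V * Matrix.diagonal g * Wᵀ)
        = W * Matrix.diagonal σ * (Vᵀ * V) * Matrix.diagonal g * Wᵀ := by
          simp only [Matrix.mul_assoc]
      _ = W * (Matrix.diagonal σ * Matrix.diagonal g) * Wᵀ := by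
          rw [hV, Matrix.mul_one]; simp only [Matrix.mul_assoc]
      _ = W * Matrix.diagonal (fun i => σ i * g i) * Wᵀ := by
          rw [Matrix.diagonal_mul_diagonal]
  -- key algebraic identity
  have key : (C + ΔC) * P =
      QC * (G * (W * Matrix.diagonal (fun i => σ i * g i) * Wᵀ))
        - QC * (G * (ΔU * P)) + ΔC * P := by
    have hCP : C * P = QC * (G * (((sel f)ᵀ * C) * P)) := by
      conv_lhs => rw [hQR, hRCeq]
      simp only [Matrix.mul_assoc]
    rw [Matrix.add_mul, hCP, hU, Matrix.sub_mul, hSVD, Matrix.mul_sub, Matrix.mul_sub,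
      ← Matrix.mul_assoc ΔU]
  rw [key]
  -- norms of the pieces
  have hspecP : spec P ≤ ε⁻¹ := by
    rw [hP, Matrix.mul_assoc, SH2.spec_orth_mul hV]
    calc spec (Matrix.diagonal g * Wᵀ) ≤ spec (Matrix.diagonal g) * spec Wᵀ :=
          SH.spec_mul_le _ _
      _ ≤ ε⁻¹ * 1 := by
          apply mul_le_mul (SH2.spec_diagonal_le (by positivity) ?_)
            (SH2.spec_transpose_le_one hW) (SH.spec_nonneg _) (by positivity)
          intro i
          rw [hg]
          dsimp only
          split_ifs with h
          · rw [abs_of_nonneg (inv_nonneg.mpr (hσ i))]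
            exact inv_anti₀ hε h
          · simpa using inv_nonneg.mpr hε.le
      _ = ε⁻¹ := mul_one _
  have hX1 : spec (QC * (G * (W * Matrix.diagonal (fun i => σ i * g i) * Wᵀ)))
      ≤ spec G := by
    rw [SH2.spec_orth_mul hQC]
    calc spec (G * (W * Matrix.diagonal (fun i => σ i * g i) * Wᵀ))
        ≤ spec G * spec (W * Matrix.diagonal (fun i => σ i * g i) * Wᵀ) := SH.spec_mul_le _ _
      _ ≤ spec G * 1 := by
          apply mul_le_mul_of_nonneg_left _ (SH.spec_nonneg G)
          rw [Matrix.mul_assoc, SH2.spec_orth_mul hW]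
          calc spec (Matrix.diagonal (fun i => σ i * g i) * Wᵀ)
              ≤ spec (Matrix.diagonal (fun i => σ i * g i)) * spec Wᵀ := SH.spec_mul_le _ _
            _ ≤ 1 * 1 := by
                apply mul_le_mul (SH2.spec_diagonal_le zero_le_one ?_)
                  (SH2.spec_transpose_le_one hW) (SH.spec_nonneg _) zero_le_one
                intro i
                rw [hg]
                dsimp only
                split_ifs with h
                · rw [mul_inv_cancel₀ (by linarith : σ i ≠ 0), abs_one]
                · simp
            _ = 1 := mul_one 1
      _ = spec G := mul_one _
  have hX2 : spec (QC * (G * (ΔU * P))) ≤ spec G * (spec ΔU * ε⁻¹) := by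
    rw [SH2.spec_orth_mul hQC]
    calc spec (G * (ΔU * P)) ≤ spec G * spec (ΔU * P) := SH.spec_mul_le _ _
      _ ≤ spec G * (spec ΔU * ε⁻¹) := by
          apply mul_le_mul_of_nonneg_left _ (SH.spec_nonneg G)
          calc spec (ΔU * P) ≤ spec ΔU * spec P := SH.spec_mul_le _ _
            _ ≤ spec ΔU * ε⁻¹ := mul_le_mul_of_nonneg_left hspecP (SH.spec_nonneg ΔU)
  have hX3 : spec (ΔC * P) ≤ spec ΔC * ε⁻¹ := by
    calc spec (ΔC * P) ≤ spec ΔC * spec P := SH.spec_mul_le _ _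
      _ ≤ spec ΔC * ε⁻¹ := mul_le_mul_of_nonneg_left hspecP (SH.spec_nonneg ΔC)
  calc spec (QC * (G * (W * Matrix.diagonal (fun i => σ i * g i) * Wᵀ))
        - QC * (G * (ΔU * P)) + ΔC * P)
      ≤ spec (QC * (G * (W * Matrix.diagonal (fun i => σ i * g i) * Wᵀ))
        - QC * (G * (ΔU * P))) + spec (ΔC * P) := SH.spec_add_le _ _
    _ ≤ spec (QC * (G * (W * Matrix.diagonal (fun i => σ i * g i) * Wᵀ)))
        + spec (QC * (G * (ΔU * P))) + spec (ΔC * P) := by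
        apply add_le_add_left
        rw [sub_eq_add_neg]
        calc spec _ ≤ spec (QC * (G * (W * Matrix.diagonal (fun i => σ i * g i) * Wᵀ)))
              + spec (-(QC * (G * (ΔU * P)))) := SH.spec_add_le _ _
          _ = _ := by rw [SH.spec_neg]
    _ ≤ spec G + spec G * (spec ΔU * ε⁻¹) + spec ΔC * ε⁻¹ :=
        add_le_add (add_le_add hX1 hX2) hX3
    _ = spec G * (1 + spec ΔU / ε) + spec ΔC / ε := by
        field_simp
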